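/- For every finite pointed model M and k ≥ 0, the rooted k-contraction of M is k-bisimilar to M. Moreover, the relations Z_h = {(x, [x']_{b(x')}) | x' ∈ maxRepr(W), x' ∼_h x, and b(x) ≥ h} for 0 ≤ h ≤ k form a k-bisimulation witnessing this. -/

import Mathlib

/-- A finite pointed Kripke model with modality indices `I` and atoms `P`. -/
structure PModel (I P : Type) where
  W : Type
  fin : Finite W
  R : I → W → W → Prop
  V : P → W → Prop
  d : W

variable {I P : Type}

/-- `h`-bisimilarity between worlds of two models (back-and-forth to depth `h`). -/
def Bisim (M N : PModel I P) : ℕ → M.W → N.W → Prop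
  | 0, w, v => ∀ p, M.V p w ↔ N.V p v
  | h+1, w, v => (∀ p, M.V p w ↔ N.V p v)
      ∧ (∀ i w', M.R i w w' → ∃ v', N.R i v v' ∧ Bisim M N h w' v')
      ∧ (∀ i v', N.R i v v' → ∃ w', M.R i w w' ∧ Bisim M N h w' v')

/-- `k`-bisimilarity of pointed models. -/
def PBisim (k : ℕ) (M N : PModel I P) : Prop := Bisim M N k M.d N.d

/-- Directed paths of length `n`. -/
def Steps (M : PModel I P) : ℕ → M.W → M.W → Prop
  | 0, w, v => w = v
  | n+1, w, v => ∃ u i, M.R i w u ∧ Steps M n u v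

/-- Depth of a world: length of a shortest path from the designated world (`⊤` if none). -/
noncomputable def depth (M : PModel I P) (w : M.W) : ℕ∞ :=
  sInf {n : ℕ∞ | ∃ m : ℕ, n = (m : ℕ∞) ∧ Steps M m M.d w}

/-- Bound `b(w) = k − d(w)`, with `⊥` for unreachable worlds. -/
noncomputable def bound (k : ℕ) (M : PModel I P) (w : M.W) : WithBot ℤ :=
  ENat.recTopCoe (⊥ : WithBot ℤ) (fun n : ℕ => (((k : ℤ) - n : ℤ) : WithBot ℤ)) (depth M w)

/-- The bound as a natural number (meaningful when `0 ≤ bound k M w`). -/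
noncomputable def nbound (k : ℕ) (M : PModel I P) (w : M.W) : ℕ :=
  k - (depth M w).toNat
/-- `x` represents `y` : `b(x) ≥ b(y) ≥ 0` and `x ∼_{b(y)} y`. -/
noncomputable def Repr' (k : ℕ) (M : PModel I P) (x y : M.W) : Prop :=
  0 ≤ bound k M y ∧ bound k M y ≤ bound k M x ∧ Bisim M M (nbound k M y) x y

/-- `x` strictly represents `y`. -/
noncomputable def SRepr (k : ℕ) (M : PModel I P) (x y : M.W) : Prop :=
  Repr' k M x y ∧ bound k M y < bound k M x

/-- Maximal representatives. -/
noncomputable def maxRepr (k : ℕ) (M : PModel I P) : Set M.W :=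
  {x | 0 ≤ bound k M x ∧ ∀ y, ¬ SRepr k M y x}

/-- Representative class `[x]_{b(x)}`. -/
noncomputable def reprClass (k : ℕ) (M : PModel I P) (x : M.W) : Set M.W :=
  {y | Bisim M M (nbound k M x) x y}

lemma depth_d (M : PModel I P) : depth M M.d = 0 := by
  have h0 : (0 : ℕ∞) ∈ {n : ℕ∞ | ∃ m : ℕ, n = (m : ℕ∞) ∧ Steps M m M.d M.d} :=
    ⟨0, by simp, rfl⟩
  have := sInf_le h0
  simpa [depth, le_zero_iff] using this

lemma bound_d (k : ℕ) (M : PModel I P) : bound k M M.d = ((k : ℤ) : WithBot ℤ) := by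
  have h := depth_d M
  simp only [bound, h, ENat.recTopCoe_zero]
  norm_num

lemma bound_le (k : ℕ) (M : PModel I P) (w : M.W) : bound k M w ≤ ((k : ℤ) : WithBot ℤ) := by
  simp only [bound]
  by_cases hd : depth M w = ⊤
  · simp [hd]
  · lift depth M w to ℕ using hd with n hn
    simp only [ENat.recTopCoe_coe]
    exact_mod_cast (by omega : (k : ℤ) - n ≤ (k:ℤ))

lemma d_mem_maxRepr (k : ℕ) (M : PModel I P) : M.d ∈ maxRepr k M := by
  constructor
  · rw [bound_d]; exact_mod_cast Int.ofNat_nonneg k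
  · rintro y ⟨_, hlt⟩
    exact absurd (lt_of_lt_of_le hlt (bound_le k M y)) (by rw [bound_d]; exact lt_irrefl _)

/-- Carrier of the rooted k-contraction: representative classes of maximal representatives. -/
def ContrW (k : ℕ) (M : PModel I P) : Type :=
  {S : Set M.W // ∃ x ∈ maxRepr k M, S = reprClass k M x}

instance (k : ℕ) (M : PModel I P) : Finite (ContrW k M) := by
  have := M.fin
  exact Subtype.finite

/-- The rooted `k`-contraction. -/
noncomputable def rootedContraction (k : ℕ) (M : PModel I P) : PModel I P where
  W := ContrW k M
  fin := inferInstance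
  R := fun i S T => ∃ x ∈ maxRepr k M, ∃ y ∈ maxRepr k M,
        S.1 = reprClass k M x ∧ T.1 = reprClass k M y ∧
        0 < bound k M x ∧ ∃ z, M.R i x z ∧ Bisim M M (nbound k M x - 1) y z
  V := fun p S => ∃ x ∈ maxRepr k M, S.1 = reprClass k M x ∧ M.V p x
  d := ⟨reprClass k M M.d, M.d, d_mem_maxRepr k M, rfl⟩

/-- A `k`-bisimulation between two pointed models, as a sequence of relations
`Z k ⊆ ... ⊆ Z 0` containing the designated pair and satisfying atom/forth/back. -/
def IsKBisim (M N : PModel I P) (k : ℕ) (Z : ℕ → M.W → N.W → Prop) : Prop :=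
  (∀ h h', h' ≤ h → h ≤ k → ∀ w v, Z h w v → Z h' w v) ∧
  Z k M.d N.d ∧
  (∀ w v, Z 0 w v → ∀ p, M.V p w ↔ N.V p v) ∧
  (∀ h, h + 1 ≤ k → ∀ w v, Z (h+1) w v →
      ∀ i w', M.R i w w' → ∃ v', N.R i v v' ∧ Z h w' v') ∧
  (∀ h, h + 1 ≤ k → ∀ w v, Z (h+1) w v →
      ∀ i v', N.R i v v' → ∃ w', M.R i w w' ∧ Z h w' v')

/- ------------------ auxiliary lemmas ------------------ -/

lemma bisim_atoms {M N : PModel I P} {h : ℕ} {w v} (hb : Bisim M N h w v) :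
    ∀ p, M.V p w ↔ N.V p v := by
  cases h with
  | zero => exact hb
  | succ h => exact hb.1

lemma bisim_mono {M N : PModel I P} : ∀ h h' (w : M.W) (v : N.W), h' ≤ h →
    Bisim M N h w v → Bisim M N h' w v := by
  intro h
  induction h with
  | zero =>
    intro h' w v hle hb
    have : h' = 0 := Nat.le_zero.mp hle
    subst this; exact hb
  | succ h ih =>
    intro h' w v hle hb
    cases h' with
    | zero => exact bisim_atoms hb
    | succ h' =>
      refine ⟨hb.1, ?_, ?_⟩
      · intro i w' hr
        obtain ⟨v', hv', hb'⟩ := hb.2.1 i w' hr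
        exact ⟨v', hv', ih h' w' v' (Nat.succ_le_succ_iff.mp hle) hb'⟩
      · intro i v' hr
        obtain ⟨w', hw', hb'⟩ := hb.2.2 i v' hr
        exact ⟨w', hw', ih h' w' v' (Nat.succ_le_succ_iff.mp hle) hb'⟩

lemma bisim_refl (M : PModel I P) : ∀ h (w : M.W), Bisim M M h w w := by
  intro h
  induction h with
  | zero => intro w p; exact Iff.rfl
  | succ h ih =>
    intro w
    exact ⟨fun p => Iff.rfl, fun i w' hr => ⟨w', hr, ih w'⟩, fun i v' hr => ⟨v', hr, ih v'⟩⟩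

lemma bisim_symm {M N : PModel I P} : ∀ h (w : M.W) (v : N.W),
    Bisim M N h w v → Bisim N M h v w := by
  intro h
  induction h with
  | zero => intro w v hb p; exact (hb p).symm
  | succ h ih =>
    intro w v hb
    refine ⟨fun p => (hb.1 p).symm, ?_, ?_⟩
    · intro i v' hr
      obtain ⟨w', hw', hb'⟩ := hb.2.2 i v' hr
      exact ⟨w', hw', ih _ _ hb'⟩
    · intro i w' hr
      obtain ⟨v', hv', hb'⟩ := hb.2.1 i w' hr
      exact ⟨v', hv', ih _ _ hb'⟩

lemma bisim_trans {M N O : PModel I P} : ∀ h (w : M.W) (v : N.W) (u : O.W),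
    Bisim M N h w v → Bisim N O h v u → Bisim M O h w u := by
  intro h
  induction h with
  | zero => intro w v u h1 h2 p; exact (h1 p).trans (h2 p)
  | succ h ih =>
    intro w v u h1 h2
    refine ⟨fun p => (h1.1 p).trans (h2.1 p), ?_, ?_⟩
    · intro i w' hr
      obtain ⟨v', hv', hb1⟩ := h1.2.1 i w' hr
      obtain ⟨u', hu', hb2⟩ := h2.2.1 i v' hv'
      exact ⟨u', hu', ih _ _ _ hb1 hb2⟩
    · intro i u' hr
      obtain ⟨v', hv', hb2⟩ := h2.2.2 i u' hr
      obtain ⟨w', hw', hb1⟩ := h1.2.2 i v' hv'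
      exact ⟨w', hw', ih _ _ _ hb1 hb2⟩

lemma steps_snoc (M : PModel I P) : ∀ m (w x : M.W), Steps M m w x →
    ∀ i y, M.R i x y → Steps M (m+1) w y := by
  intro m
  induction m with
  | zero =>
    intro w x hs i y hr
    cases hs
    exact ⟨y, i, hr, rfl⟩
  | succ m ih =>
    intro w x hs i y hr
    obtain ⟨u, j, hj, hs⟩ := hs
    exact ⟨u, j, hj, ih u x hs i y hr⟩

lemma depth_spec (M : PModel I P) (w : M.W) {n : ℕ} (hd : depth M w = (n : ℕ∞)) :
    Steps M n M.d w := by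
  have h1 : sInf {m : ℕ∞ | ∃ m' : ℕ, m = (m' : ℕ∞) ∧ Steps M m' M.d w} < (n : ℕ∞) + 1 := by
    rw [show sInf {m : ℕ∞ | ∃ m' : ℕ, m = (m' : ℕ∞) ∧ Steps M m' M.d w} = depth M w from rfl, hd]
    exact_mod_cast Nat.lt_succ_self n
  obtain ⟨a, ⟨m, rfl, hs⟩, hlt⟩ := sInf_lt_iff.mp h1
  have h2 : (n : ℕ∞) ≤ (m : ℕ∞) := by
    rw [← hd]
    exact sInf_le ⟨m, rfl, hs⟩
  have hm1 : m < n + 1 := by exact_mod_cast (by push_cast at hlt ⊢; exact_mod_cast hlt : (m:ℕ∞) < ((n+1:ℕ):ℕ∞))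
  have hm2 : n ≤ m := by exact_mod_cast h2
  have : m = n := by omega
  subst this
  exact hs

lemma depth_le_succ (M : PModel I P) {i : I} {x y : M.W} (hr : M.R i x y) :
    depth M y ≤ depth M x + 1 := by
  by_cases hd : depth M x = ⊤
  · simp [hd]
  · lift depth M x to ℕ using hd with n hn
    have hs : Steps M n M.d x := depth_spec M x hn.symm
    have hs' : Steps M (n+1) M.d y := steps_snoc M n M.d x hs i y hr
    have : depth M y ≤ ((n+1 : ℕ) : ℕ∞) := sInf_le ⟨n+1, rfl, hs'⟩
    calc depth M y ≤ ((n+1 : ℕ) : ℕ∞) := this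
      _ = (n : ℕ∞) + 1 := by push_cast; ring

lemma le_bound_iff (k : ℕ) (M : PModel I P) (w : M.W) (h : ℕ) :
    (((h : ℕ) : ℤ) : WithBot ℤ) ≤ bound k M w ↔ 0 ≤ bound k M w ∧ h ≤ nbound k M w := by
  simp only [bound, nbound]
  by_cases hd : depth M w = ⊤
  · simp [hd]
  · lift depth M w to ℕ using hd with n hn
    simp only [ENat.recTopCoe_coe, ENat.toNat_coe]
    constructor
    · intro h1
      have h2 : ((h : ℕ) : ℤ) ≤ (k : ℤ) - n := by exact_mod_cast h1
      constructor
      · exact_mod_cast (by omega : (0 : ℤ) ≤ (k : ℤ) - n)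
      · omega
    · rintro ⟨h1, h2⟩
      have h3 : (0 : ℤ) ≤ (k : ℤ) - n := by exact_mod_cast h1
      exact_mod_cast (by omega : ((h : ℕ) : ℤ) ≤ (k : ℤ) - n)

lemma bound_eq_nbound {k : ℕ} {M : PModel I P} {w : M.W} (hw : 0 ≤ bound k M w) :
    bound k M w = ((nbound k M w : ℤ) : WithBot ℤ) := by
  simp only [bound, nbound] at *
  by_cases hd : depth M w = ⊤
  · rw [hd] at hw
    simp at hw
  · lift depth M w to ℕ using hd with n hn
    simp only [ENat.recTopCoe_coe, ENat.toNat_coe] at *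
    have h3 : (0 : ℤ) ≤ (k : ℤ) - n := by exact_mod_cast hw
    have : (k : ℤ) - n = ((k - n : ℕ) : ℤ) := by omega
    rw [this]

lemma bound_le_iff {k : ℕ} {M : PModel I P} {x y : M.W}
    (hx : 0 ≤ bound k M x) (hy : 0 ≤ bound k M y) :
    bound k M x ≤ bound k M y ↔ nbound k M x ≤ nbound k M y := by
  rw [bound_eq_nbound hx, bound_eq_nbound hy]
  exact_mod_cast Iff.rfl

lemma bound_lt_iff {k : ℕ} {M : PModel I P} {x y : M.W}
    (hx : 0 ≤ bound k M x) (hy : 0 ≤ bound k M y) :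
    bound k M x < bound k M y ↔ nbound k M x < nbound k M y := by
  rw [bound_eq_nbound hx, bound_eq_nbound hy]
  exact_mod_cast Iff.rfl

lemma bound_step {k : ℕ} {M : PModel I P} {i : I} {x y : M.W} (hr : M.R i x y) (h : ℕ)
    (hx : (((h + 1 : ℕ) : ℤ) : WithBot ℤ) ≤ bound k M x) :
    (((h : ℕ) : ℤ) : WithBot ℤ) ≤ bound k M y := by
  have hdy := depth_le_succ M hr
  simp only [bound] at hx ⊢
  by_cases hdx : depth M x = ⊤
  · rw [hdx] at hx; simp at hx
  · lift depth M x to ℕ using hdx with n hn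
    simp only [ENat.recTopCoe_coe] at hx
    have hx' : ((h + 1 : ℕ) : ℤ) ≤ (k : ℤ) - n := by exact_mod_cast hx
    have hdy' : depth M y ≠ ⊤ := by
      intro ht
      rw [ht, top_le_iff] at hdy
      have : ((n + 1 : ℕ) : ℕ∞) = ⊤ := by push_cast; exact hdy
      exact (ENat.coe_ne_top (n+1)) this
    lift depth M y to ℕ using hdy' with m hm
    simp only [ENat.recTopCoe_coe]
    have hmn : (m : ℕ∞) ≤ ((n + 1 : ℕ) : ℕ∞) := by
      refine le_trans hdy ?_
      push_cast; exact le_of_eq (by ring)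
    have hmn' : m ≤ n + 1 := by exact_mod_cast hmn
    exact_mod_cast (by omega : ((h : ℕ) : ℤ) ≤ (k : ℤ) - m)

lemma exists_maxRepr (k : ℕ) (M : PModel I P) (w : M.W) (hw : 0 ≤ bound k M w) :
    ∃ y ∈ maxRepr k M, Bisim M M (nbound k M w) y w ∧ nbound k M w ≤ nbound k M y := by
  have := M.fin
  have hA : ({y | Repr' k M y w}).Finite := Set.toFinite _
  have hne : w ∈ {y | Repr' k M y w} := ⟨hw, le_refl _, bisim_refl M _ w⟩
  obtain ⟨y, hyA, hmax⟩ := hA.exists_maximalFor (nbound k M) _ ⟨w, hne⟩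
  obtain ⟨hw0, hwy, hbyw⟩ := hyA
  have hy0 : 0 ≤ bound k M y := le_trans hw0 hwy
  refine ⟨y, ⟨hy0, ?_⟩, hbyw, (bound_le_iff hw0 hy0).mp hwy⟩
  rintro u ⟨⟨_, hyu, hbuy⟩, hlt⟩
  have hu0 : 0 ≤ bound k M u := le_trans hy0 hyu
  have huA : u ∈ {y | Repr' k M y w} := by
    refine ⟨hw0, le_trans hwy hyu, ?_⟩
    have h1 : Bisim M M (nbound k M w) u y :=
      bisim_mono _ _ _ _ ((bound_le_iff hw0 hy0).mp hwy) hbuy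
    exact bisim_trans _ _ _ _ h1 hbyw
  have h2 : nbound k M y < nbound k M u := (bound_lt_iff hy0 hu0).mp hlt
  have h3 := hmax huA (le_of_lt h2)
  omega

lemma maxRepr_ge {k : ℕ} {M : PModel I P} {x' x : M.W} {h : ℕ} (hx' : x' ∈ maxRepr k M)
    (hb : Bisim M M h x' x) (hx : (((h : ℕ) : ℤ) : WithBot ℤ) ≤ bound k M x) :
    h ≤ nbound k M x' := by
  by_contra hc
  push_neg at hc
  obtain ⟨hx0, hxn⟩ := (le_bound_iff k M x h).mp hx
  refine hx'.2 x ⟨⟨hx'.1, ?_, ?_⟩, ?_⟩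
  · rw [bound_le_iff hx'.1 hx0]; omega
  · exact bisim_mono _ _ _ _ (le_of_lt hc) (bisim_symm _ _ _ hb)
  · rw [bound_lt_iff hx'.1 hx0]; omega

lemma maxRepr_class {k : ℕ} {M : PModel I P} {x' x'' : M.W}
    (h1 : x' ∈ maxRepr k M) (h2 : x'' ∈ maxRepr k M)
    (he : reprClass k M x' = reprClass k M x'') :
    nbound k M x' = nbound k M x'' ∧ Bisim M M (nbound k M x') x' x'' := by
  have m1 : Bisim M M (nbound k M x') x' x'' := by
    have : x'' ∈ reprClass k M x'' := bisim_refl M _ x''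
    rw [← he] at this
    exact this
  have m2 : Bisim M M (nbound k M x'') x'' x' := by
    have : x' ∈ reprClass k M x' := bisim_refl M _ x'
    rw [he] at this
    exact this
  have hle1 : nbound k M x' ≤ nbound k M x'' := by
    by_contra hc
    push_neg at hc
    refine h2.2 x' ⟨⟨h2.1, ?_, bisim_symm _ _ _ m2⟩, ?_⟩
    · rw [bound_le_iff h2.1 h1.1]; omega
    · rw [bound_lt_iff h2.1 h1.1]; omega
  have hle2 : nbound k M x'' ≤ nbound k M x' := by
    by_contra hc
    push_neg at hc
    refine h1.2 x'' ⟨⟨h1.1, ?_, bisim_symm _ _ _ m1⟩, ?_⟩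
    · rw [bound_le_iff h1.1 h2.1]; omega
    · rw [bound_lt_iff h1.1 h2.1]; omega
  exact ⟨le_antisymm hle1 hle2, m1⟩

lemma isKBisim_pbisim {M N : PModel I P} {k : ℕ} {Z : ℕ → M.W → N.W → Prop}
    (hZ : IsKBisim M N k Z) : PBisim k M N := by
  obtain ⟨hmono, hd, hatoms, hforth, hback⟩ := hZ
  suffices H : ∀ h, h ≤ k → ∀ w v, Z h w v → Bisim M N h w v from H k le_rfl _ _ hd
  intro h
  induction h with
  | zero => exact fun _ w v hz => hatoms w v hz
  | succ h ih =>
    intro hk w v hz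
    refine ⟨hatoms w v (hmono (h+1) 0 (Nat.zero_le _) hk w v hz), ?_, ?_⟩
    · intro i w' hr
      obtain ⟨v', hv', hz'⟩ := hforth h hk w v hz i w' hr
      exact ⟨v', hv', ih (by omega) w' v' hz'⟩
    · intro i v' hr
      obtain ⟨w', hw', hz'⟩ := hback h hk w v hz i v' hr
      exact ⟨w', hw', ih (by omega) w' v' hz'⟩

/-- The rooted `k`-contraction is `k`-bisimilar to the original model, as witnessed
by the relations `Z h = {(x, [x']_{b(x')}) | x' ∈ maxRepr(W), x' ∼_h x, b(x) ≥ h}`. -/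
theorem rootedContraction_k_bisim (k : ℕ) (M : PModel I P) :
    IsKBisim M (rootedContraction k M) k
      (fun h x S => ∃ x' ∈ maxRepr k M, S.1 = reprClass k M x' ∧
        Bisim M M h x' x ∧ ((h : ℤ) : WithBot ℤ) ≤ bound k M x) ∧
    PBisim k M (rootedContraction k M) := by
  have HK : IsKBisim M (rootedContraction k M) k
      (fun h x S => ∃ x' ∈ maxRepr k M, S.1 = reprClass k M x' ∧
        Bisim M M h x' x ∧ ((h : ℤ) : WithBot ℤ) ≤ bound k M x) := by
    refine ⟨?_, ?_, ?_, ?_, ?_⟩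
    · -- monotonicity
      rintro h h' hle hk x S ⟨x', hm, hS, hb, hbd⟩
      refine ⟨x', hm, hS, bisim_mono _ _ _ _ hle hb, le_trans ?_ hbd⟩
      exact_mod_cast hle
    · -- designated pair
      exact ⟨M.d, d_mem_maxRepr k M, rfl, bisim_refl M k M.d,
        by rw [bound_d]⟩
    · -- atoms
      rintro x S ⟨x', hm, hS, hb, _⟩ p
      constructor
      · intro hV
        exact ⟨x', hm, hS, (bisim_atoms hb p).mpr hV⟩
      · rintro ⟨x'', hm'', hS'', hV⟩
        have he : reprClass k M x' = reprClass k M x'' := by rw [← hS, hS'']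
        have hcl := (maxRepr_class hm hm'' he).2
        exact (bisim_atoms hb p).mp ((bisim_atoms hcl p).mpr hV)
    · -- forth
      rintro h hk x S ⟨x', hx'm, hS, hb, hx⟩ i x₁ hr
      have hge : h + 1 ≤ nbound k M x' := maxRepr_ge hx'm hb hx
      obtain ⟨z, hrz, hbz⟩ := hb.2.2 i x₁ hr
      have hx'b : (((nbound k M x' - 1 + 1 : ℕ) : ℤ) : WithBot ℤ) ≤ bound k M x' := by
        rw [bound_eq_nbound hx'm.1]
        exact_mod_cast (by omega : ((nbound k M x' - 1 + 1 : ℕ) : ℤ) ≤ (nbound k M x' : ℤ))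
      have hz := bound_step hrz (nbound k M x' - 1) hx'b
      obtain ⟨hz0, hznb⟩ := (le_bound_iff k M z _).mp hz
      obtain ⟨y', hy'm, hby', hnb⟩ := exists_maxRepr k M z hz0
      refine ⟨⟨reprClass k M y', y', hy'm, rfl⟩, ?_, ?_⟩
      · refine ⟨x', hx'm, y', hy'm, hS, rfl, ?_, z, hrz,
          bisim_mono _ _ _ _ (by omega : nbound k M x' - 1 ≤ nbound k M z) hby'⟩
        rw [bound_eq_nbound hx'm.1]
        exact_mod_cast (by omega : (0 : ℤ) < (nbound k M x' : ℤ))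
      · refine ⟨y', hy'm, rfl, ?_, bound_step hr h hx⟩
        exact bisim_trans _ _ _ _
          (bisim_mono _ _ _ _ (by omega : h ≤ nbound k M z) hby') hbz
    · -- back
      rintro h hk x S ⟨x', hx'm, hS, hb, hx⟩ i T hR
      obtain ⟨x'', hx''m, y', hy'm, hS'', hT, hpos, z, hrz, hbyz⟩ := hR
      have hge : h + 1 ≤ nbound k M x' := maxRepr_ge hx'm hb hx
      have he : reprClass k M x' = reprClass k M x'' := by rw [← hS, hS'']
      obtain ⟨hnb_eq, hcl⟩ := maxRepr_class hx'm hx''m he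
      have hb'' : Bisim M M (h+1) x'' x :=
        bisim_trans _ _ _ _ (bisim_symm _ _ _ (bisim_mono _ _ _ _ hge hcl)) hb
      obtain ⟨x₁, hr₁, hbz₁⟩ := hb''.2.1 i z hrz
      refine ⟨x₁, hr₁, y', hy'm, hT, ?_, bound_step hr₁ h hx⟩
      exact bisim_trans _ _ _ _
        (bisim_mono _ _ _ _ (by omega : h ≤ nbound k M x'' - 1) hbyz) hbz₁
  exact ⟨HK, isKBisim_pbisim HK⟩
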